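/- Let [v,X] be a node of G_M with level([v,X]) = l finite. Suppose [u_1,B] and [u_2,B] are two distinct nodes, each of which lies on every shortest strongly simple path from s to [v,X], and suppose level([u_1,A]) ≥ l and level([u_2,A]) ≥ l (where an undefined level counts as ≥ l). Then level([u_1,B]) ≠ level([u_2,B]). In particular, among the nodes [u,B] lying on all shortest strongly simple paths from s to [v,X] and satisfying level([u,A]) ≥ l, there is at most one of any given level, so the one of maximal level is unique if it exists. -/

import Mathlib

variable {V : Type*}

/-- `M` is a matching of the simple graph `G`: a set of edges of `G`,
no two of which share a node. -/
def IsMatchingOn (G : SimpleGraph V) (M : Set (Sym2 V)) : Prop :=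
  M ⊆ G.edgeSet ∧ ∀ e ∈ M, ∀ f ∈ M, ∀ v : V, v ∈ e → v ∈ f → e = f

/-- A node is `M`-free if it is incident to no edge of `M`. -/
def MFree (M : Set (Sym2 V)) (v : V) : Prop := ∀ e ∈ M, v ∉ e

/-- The two labels `A` and `B`. -/
inductive Lbl where
  | A : Lbl
  | B : Lbl

/-- The opposite label: `Ā = B` and `B̄ = A`. -/
def Lbl.flip : Lbl → Lbl
  | .A => .B
  | .B => .A

/-- Nodes of the directed graph `G_M`: the nodes `[v,A]`, `[v,B]` for `v ∈ V`
together with two new nodes `s` and `t`. -/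
inductive GMNode (V : Type*) where
  | inner : V → Lbl → GMNode V
  | s : GMNode V
  | t : GMNode V

/-- The directed adjacency of `G_M`: the edges `([v,A],[w,B])` and
`([w,A],[v,B])` for `(v,w) ∈ M`; the edges `([x,B],[y,A])` and `([y,B],[x,A])`
for `(x,y) ∈ E ∖ M`; and the edges `(s,[v,B])` and `([v,A],t)` for every
`M`-free node `v`. -/
def gmAdj (G : SimpleGraph V) (M : Set (Sym2 V)) : GMNode V → GMNode V → Prop
  | .inner v .A, .inner w .B => s(v, w) ∈ M
  | .inner x .B, .inner y .A => s(x, y) ∈ G.edgeSet \ M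
  | .s, .inner v .B => MFree M v
  | .inner v .A, .t => MFree M v
  | _, _ => False

/-- `p` is a directed path from `u` to `v` with respect to the relation `R`. -/
def IsDirPath {α : Type*} (R : α → α → Prop) (p : List α) (u v : α) : Prop :=
  p.Chain' R ∧ p.head? = some u ∧ p.getLast? = some v

/-- A list of nodes of `G_M` is strongly simple if it has no repeated node and
contains, for each `v ∈ V`, at most one of the two nodes `[v,A]`, `[v,B]`. -/
def StronglySimple (p : List (GMNode V)) : Prop :=
  p.Nodup ∧ ∀ v : V, ¬(GMNode.inner v .A ∈ p ∧ GMNode.inner v .B ∈ p)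

/-- The level of a node of `G_M`: the length of a shortest strongly simple path
from `s` to it (`⊤` if there is no such path, i.e. the level is undefined). -/
noncomputable def gmLevel (G : SimpleGraph V) (M : Set (Sym2 V)) (x : GMNode V) : ℕ∞ :=
  sInf ((fun p : List (GMNode V) => ((p.length - 1 : ℕ) : ℕ∞)) ''
    {p : List (GMNode V) | IsDirPath (gmAdj G M) p GMNode.s x ∧ StronglySimple p})


section Aux
variable {G : SimpleGraph V} {M : Set (Sym2 V)}

lemma not_adj_from_t {x : GMNode V} : ¬ gmAdj G M .t x := by
  cases x with
  | inner w L => cases L <;> simp [gmAdj]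
  | s => simp [gmAdj]
  | t => simp [gmAdj]

lemma adj_to_A {z : GMNode V} {w : V} (h : gmAdj G M z (.inner w .A)) :
    ∃ y, z = .inner y .B ∧ s(y, w) ∈ G.edgeSet \ M := by
  cases z with
  | inner y L => cases L with
    | A => simp [gmAdj] at h
    | B => exact ⟨y, rfl, h⟩
  | s => simp [gmAdj] at h
  | t => simp [gmAdj] at h

lemma adj_to_B {z : GMNode V} {w : V} (h : gmAdj G M z (.inner w .B)) :
    (z = .s ∧ MFree M w) ∨ ∃ x, z = .inner x .A ∧ s(x, w) ∈ M := by
  cases z with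
  | inner x L => cases L with
    | A => exact Or.inr ⟨x, rfl, h⟩
    | B => simp [gmAdj] at h
  | s => exact Or.inl ⟨rfl, h⟩
  | t => simp [gmAdj] at h

lemma adj_from_A {z : GMNode V} {w : V} (h : gmAdj G M (.inner w .A) z) :
    z = .t ∨ ∃ x, z = .inner x .B ∧ s(w, x) ∈ M := by
  cases z with
  | inner x L => cases L with
    | A => simp [gmAdj] at h
    | B => exact Or.inr ⟨x, rfl, h⟩
  | s => simp [gmAdj] at h
  | t => exact Or.inl rfl

lemma adj_flip {x y : V} {Lx Ly : Lbl} (h : gmAdj G M (.inner x Lx) (.inner y Ly)) :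
    gmAdj G M (.inner y Ly.flip) (.inner x Lx.flip) := by
  cases Lx <;> cases Ly <;> simp [gmAdj, Lbl.flip] at h ⊢
  · rw [Sym2.eq_swap]; exact h
  · exact ⟨h.1.symm, by rw [Sym2.eq_swap]; exact h.2⟩

lemma matching_unique (hM : IsMatchingOn G M) {x x' w : V}
    (h1 : s(x, w) ∈ M) (h2 : s(x', w) ∈ M) : x = x' := by
  have := hM.2 _ h1 _ h2 w (by simp) (by simp)
  rw [Sym2.eq_iff] at this
  rcases this with ⟨h, -⟩ | ⟨h, h'⟩
  · exact h
  · exact h.trans h'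

lemma not_mfree_of_matched (hM : IsMatchingOn G M) {x w : V} (h : s(x, w) ∈ M) :
    ¬ MFree M w := fun hf => hf _ h (by simp)

lemma level_le {p : List (GMNode V)} {x : GMNode V}
    (hp : IsDirPath (gmAdj G M) p GMNode.s x) (hss : StronglySimple p) :
    gmLevel G M x ≤ ((p.length - 1 : ℕ) : ℕ∞) :=
  sInf_le ⟨p, ⟨hp, hss⟩, rfl⟩

lemma ss_sublist {p q : List (GMNode V)} (h : StronglySimple p) (hq : List.Sublist q p) :
    StronglySimple q :=
  ⟨h.1.sublist hq, fun w hw => h.2 w ⟨hq.mem hw.1, hq.mem hw.2⟩⟩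

lemma ss_append {p q : List (GMNode V)} (hp : StronglySimple p) (hq : StronglySimple q)
    (hcross : ∀ w L L', GMNode.inner w L ∈ p → GMNode.inner w L' ∈ q → False)
    (hs : GMNode.s ∈ p → GMNode.s ∈ q → False)
    (ht : GMNode.t ∈ p → GMNode.t ∈ q → False) :
    StronglySimple (p ++ q) := by
  constructor
  · rw [List.nodup_append]
    refine ⟨hp.1, hq.1, fun x hxp y hxq hxy => ?_⟩
    subst hxy
    cases x with
    | inner w L => exact hcross w L L hxp hxq
    | s => exact hs hxp hxq
    | t => exact ht hxp hxq
  · rintro w ⟨hA, hB⟩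
    rw [List.mem_append] at hA hB
    rcases hA with hA | hA <;> rcases hB with hB | hB
    · exact hp.2 w ⟨hA, hB⟩
    · exact hcross w .A .B hA hB
    · exact hcross w .B .A hB hA
    · exact hq.2 w ⟨hA, hB⟩

lemma exists_shortest {x : GMNode V} {l : ℕ} (hl : gmLevel G M x = (l : ℕ∞)) :
    ∃ p, IsDirPath (gmAdj G M) p GMNode.s x ∧ StronglySimple p ∧ p.length = l + 1 := by
  have h1 : gmLevel G M x < ((l + 1 : ℕ) : ℕ∞) := by
    rw [hl]; exact_mod_cast Nat.lt_succ_self l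
  rw [gmLevel, sInf_lt_iff] at h1
  obtain ⟨b, hb, hbl⟩ := h1
  obtain ⟨p, ⟨hp, hss⟩, rfl⟩ := hb
  have hge : ((l : ℕ) : ℕ∞) ≤ ((p.length - 1 : ℕ) : ℕ∞) := hl ▸ level_le hp hss
  have hne : p ≠ [] := by
    intro h; subst h; simp [IsDirPath] at hp
  have h2 : p.length - 1 = l := by
    have := Nat.cast_le.mp hge
    have := Nat.cast_lt.mp hbl
    omega
  have h3 : 1 ≤ p.length := Nat.one_le_iff_ne_zero.mpr (by simpa using hne)
  exact ⟨p, hp, hss, by omega⟩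

lemma path_nonempty {R : GMNode V → GMNode V → Prop} {p : List (GMNode V)} {a b : GMNode V}
    (hp : IsDirPath R p a b) : p ≠ [] := by
  intro h; subst h; simp [IsDirPath] at hp

lemma path_getElem_zero {R : GMNode V → GMNode V → Prop} {p : List (GMNode V)} {a b : GMNode V}
    (hp : IsDirPath R p a b) (h : 0 < p.length) : p[0] = a := by
  have := hp.2.1
  rw [List.head?_eq_getElem?] at this
  simpa [List.getElem?_eq_getElem h] using this

lemma path_getElem_last {R : GMNode V → GMNode V → Prop} {p : List (GMNode V)} {a b : GMNode V}
    (hp : IsDirPath R p a b) (h : p.length - 1 < p.length) : p[p.length - 1] = b := by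
  have := hp.2.2
  rw [List.getLast?_eq_getElem?] at this
  simpa [List.getElem?_eq_getElem h] using this

lemma path_adj {R : GMNode V → GMNode V → Prop} {p : List (GMNode V)} {a b : GMNode V}
    (hp : IsDirPath R p a b) {i : ℕ} (h : i + 1 < p.length) :
    R (p[i]'(by omega)) (p[i+1]'h) := by
  have := List.isChain_iff_getElem.mp hp.1 i h
  simpa using this

lemma t_not_mem {p : List (GMNode V)} {a : GMNode V} {w : V} {L : Lbl}
    (hp : IsDirPath (gmAdj G M) p a (.inner w L)) : GMNode.t ∉ p := by
  intro hmem
  obtain ⟨i, hi, hieq⟩ := List.mem_iff_getElem.mp hmem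
  rcases Nat.lt_or_ge i (p.length - 1) with h | h
  · exact not_adj_from_t (hieq ▸ path_adj hp (by omega))
  · have : i = p.length - 1 := by omega
    subst this
    rw [path_getElem_last hp (by omega)] at hieq
    cases hieq

lemma prefix_path {R : GMNode V → GMNode V → Prop} {p : List (GMNode V)} {a b : GMNode V}
    (hp : IsDirPath R p a b) {m : ℕ} (hm : m < p.length) :
    IsDirPath R (p.take (m+1)) a (p[m]'hm) := by
  obtain ⟨hc, hh, hl'⟩ := hp
  refine ⟨hc.take _, ?_, ?_⟩
  · rw [List.head?_eq_getElem?] at hh ⊢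
    rw [List.getElem?_take] at *
    simpa using hh
  · rw [List.getLast?_eq_getElem?]
    have hlen : (p.take (m+1)).length = m + 1 := by
      rw [List.length_take]; omega
    rw [hlen, List.getElem?_take]
    simp [List.getElem?_eq_getElem hm]

lemma gidx {α : Type*} {p : List α} {a b : ℕ} (h : a = b) (ha : a < p.length) :
    p[a]'ha = p[b]'(h ▸ ha) := by subst h; rfl

lemma vertex_once {p : List (GMNode V)} (hss : StronglySimple p) {t₁ t₂ : ℕ}
    (h₁ : t₁ < p.length) (h₂ : t₂ < p.length) {w : V} {L₁ L₂ : Lbl}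
    (e₁ : p[t₁] = .inner w L₁) (e₂ : p[t₂] = .inner w L₂) : t₁ = t₂ := by
  have mem₁ : GMNode.inner w L₁ ∈ p := e₁ ▸ List.getElem_mem h₁
  have mem₂ : GMNode.inner w L₂ ∈ p := e₂ ▸ List.getElem_mem h₂
  cases L₁ <;> cases L₂
  · exact (hss.1.getElem_inj_iff).mp (e₁.trans e₂.symm)
  · exact absurd ⟨mem₁, mem₂⟩ (hss.2 w)
  · exact absurd ⟨mem₂, mem₁⟩ (hss.2 w)
  · exact (hss.1.getElem_inj_iff).mp (e₁.trans e₂.symm)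

def nflip : GMNode V → GMNode V
  | .inner w L => .inner w L.flip
  | x => x

lemma nflip_invol (x : GMNode V) : nflip (nflip x) = x := by
  cases x with
  | inner w L => cases L <;> rfl
  | s => rfl
  | t => rfl

lemma nflip_inj : Function.Injective (nflip : GMNode V → GMNode V) := by
  intro a b h
  rw [← nflip_invol a, h, nflip_invol]

lemma ss_flip_reverse {p : List (GMNode V)} (h : StronglySimple p) :
    StronglySimple (p.reverse.map nflip) := by
  constructor
  · exact (List.nodup_reverse.mpr h.1).map nflip_inj
  · rintro w ⟨hA, hB⟩
    rw [List.mem_map] at hA hB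
    obtain ⟨a, ha, hae⟩ := hA
    obtain ⟨b, hb, hbe⟩ := hB
    have ha' : a = GMNode.inner w .B := by
      rw [← nflip_invol a, hae]; rfl
    have hb' : b = GMNode.inner w .A := by
      rw [← nflip_invol b, hbe]; rfl
    exact h.2 w ⟨hb' ▸ List.mem_reverse.mp hb, ha' ▸ List.mem_reverse.mp ha⟩

set_option maxHeartbeats 1000000 in
theorem claim (hM : IsMatchingOn G M)
    {v : V} {X : Lbl} {l : ℕ} (hl : gmLevel G M (.inner v X) = (l : ℕ∞))
    {P : List (GMNode V)} (hP : IsDirPath (gmAdj G M) P GMNode.s (.inner v X))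
    (hPss : StronglySimple P) (hPlen : P.length = l + 1)
    {u : V} {j : ℕ} (hj : j < P.length) (hPj : P[j] = GMNode.inner u Lbl.B)
    (hA : (l : ℕ∞) ≤ gmLevel G M (.inner u .A)) :
    ∀ (d r : ℕ) (hr : r < P.length), j ≤ r → P.length - r ≤ d →
      ∀ Q : List (GMNode V), IsDirPath (gmAdj G M) Q GMNode.s (P[r]'hr) →
        StronglySimple Q → Q.length ≤ j →
        (∀ (t : ℕ) (ht : t < P.length), j ≤ t → t < r →
          ∀ w L, P[t]'ht = GMNode.inner w L → ∀ L', GMNode.inner w L' ∉ Q) →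
        False := by
  classical
  have hPpos : 0 < P.length := by omega
  have hP0 : P[0] = GMNode.s := path_getElem_zero hP hPpos
  have hinner : ∀ (t : ℕ) (ht : t < P.length), 1 ≤ t → ∃ w L, P[t]'ht = GMNode.inner w L := by
    intro t ht h1
    cases hx : P[t]'ht with
    | inner w L => exact ⟨w, L, rfl⟩
    | s => exact absurd (hPss.1.getElem_inj_iff.mp (hx.trans hP0.symm)) (by omega)
    | t =>
        rcases Nat.lt_or_ge t (P.length - 1) with h | h
        · exact absurd (hx ▸ path_adj hP (show t+1 < P.length by omega)) not_adj_from_t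
        · exfalso
          have ht' : t = P.length - 1 := by omega
          have hlast := path_getElem_last hP (by omega)
          rw [← gidx ht' ht, hx] at hlast
          cases hlast
  have hj1 : 1 ≤ j := by
    rcases Nat.eq_zero_or_pos j with h | h
    · exfalso; rw [gidx h hj, hP0] at hPj; cases hPj
    · exact h
  intro d
  induction d with
  | zero => intro r hr hjr hd; omega
  | succ d ih =>
    intro r hr hjr hd Q hQ hQss hQlen hinv
    have hQne : Q ≠ [] := path_nonempty hQ
    have hQpos : 0 < Q.length := List.length_pos_iff.mpr hQne
    have hQ0 : Q[0] = GMNode.s := path_getElem_zero hQ hQpos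
    have hQlast : Q[Q.length - 1]'(by omega) = P[r]'hr := path_getElem_last hQ (by omega)
    rcases Nat.lt_or_ge r (P.length - 1) with hrl | hrl
    swap
    · -- r is the last index: Q is a short strongly simple path to [v,X]
      have hre : r = P.length - 1 := by omega
      have hPr : P[r]'hr = GMNode.inner v X := by
        rw [gidx hre hr]; exact path_getElem_last hP (by omega)
      have hlev := level_le (hPr ▸ hQ) hQss
      rw [hl] at hlev
      have hle := Nat.cast_le.mp hlev
      omega
    obtain ⟨z, Lz, hPr⟩ := hinner r hr (by omega)
    have hn2 : 2 ≤ Q.length := by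
      by_contra h2
      have h0 : Q.length - 1 = 0 := by omega
      rw [gidx h0 (by omega), hQ0, hPr] at hQlast
      cases hQlast
    by_cases hc : ∃ t : ℕ, r + 1 ≤ t ∧
        ∃ w L L', P[t]? = some (GMNode.inner w L) ∧ GMNode.inner w L' ∈ Q
    swap
    · -- no conflict: splice Q with the rest of P
      have hnc : ∀ (t : ℕ) (ht : t < P.length), r+1 ≤ t → ∀ w L,
          P[t]'ht = GMNode.inner w L → ∀ L', GMNode.inner w L' ∉ Q := by
        intro t ht htr w L hPt L' hmem
        exact hc ⟨t, htr, w, L, L',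
          List.getElem?_eq_some_iff.mpr ⟨ht, hPt⟩, hmem⟩
      have hdlen : (P.drop (r+1)).length = P.length - (r+1) := List.length_drop
      have hdne : P.drop (r+1) ≠ [] := by
        apply List.ne_nil_of_length_pos; rw [List.length_drop]; omega
      have hWpath : IsDirPath (gmAdj G M) (Q ++ P.drop (r+1)) GMNode.s (GMNode.inner v X) := by
        refine ⟨?_, ?_, ?_⟩
        · show List.IsChain _ _
          rw [List.isChain_append]
          refine ⟨hQ.1, hP.1.drop _, ?_⟩
          intro x hx y hy
          rw [hQ.2.2] at hx
          have hx' : x = P[r]'hr := Eq.symm (by simpa using hx)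
          rw [List.head?_eq_getElem?, List.getElem?_drop] at hy
          have hy' : y = P[r+1]'(by omega) := by
            have h0 : r + 1 + 0 = r + 1 := by omega
            rw [List.getElem?_eq_getElem (show r+1+0 < P.length by omega), gidx h0] at hy
            exact Eq.symm (by simpa using hy)
          rw [hx', hy']
          exact path_adj hP (show r+1 < P.length by omega)
        · rw [List.head?_append, hQ.2.1]; rfl
        · rw [List.getLast?_append, List.getLast?_eq_getElem?, List.getElem?_drop, hdlen]
          have he : r + 1 + (P.length - (r+1) - 1) = P.length - 1 := by omega
          rw [List.getElem?_eq_getElem (show r+1+(P.length - (r+1) - 1) < P.length by omega),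
            gidx he, path_getElem_last hP (by omega)]
          rfl
      have hWss : StronglySimple (Q ++ P.drop (r+1)) := by
        refine ss_append hQss (ss_sublist hPss (List.drop_sublist _ _)) ?_ ?_ ?_
        · intro w L L' hwQ hwD
          obtain ⟨i, hi, hieq⟩ := List.mem_iff_getElem.mp hwD
          rw [List.getElem_drop] at hieq
          exact hnc (r+1+i) (by rw [hdlen] at hi; omega) (by omega) w L' hieq L hwQ
        · intro hsQ hsD
          obtain ⟨i, hi, hieq⟩ := List.mem_iff_getElem.mp hsD
          rw [List.getElem_drop] at hieq
          have h0 := hPss.1.getElem_inj_iff.mp (hieq.trans hP0.symm)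
          omega
        · intro htQ _
          exact t_not_mem (hPr ▸ hQ) htQ
      have hlev := level_le hWpath hWss
      rw [hl] at hlev
      have hle := Nat.cast_le.mp hlev
      rw [List.length_append, hdlen] at hle
      omega
    · -- conflict exists
      set q := Nat.find hc with hqdef
      have hfs := Nat.find_spec hc
      rw [← hqdef] at hfs
      obtain ⟨hq1, w, Y, Z, hPq?, hZQ⟩ := hfs
      rw [List.getElem?_eq_some_iff] at hPq?
      obtain ⟨hq, hPq⟩ := hPq?
      have hmin' : ∀ (t : ℕ) (ht : t < P.length), r+1 ≤ t → t < q → ∀ w' L,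
          P[t]'ht = GMNode.inner w' L → ∀ L', GMNode.inner w' L' ∈ Q → False := by
        intro t ht htr htq w' L hPt L' hmem
        exact Nat.find_min hc (hqdef ▸ htq)
          ⟨htr, w', L, L', List.getElem?_eq_some_iff.mpr ⟨ht, hPt⟩, hmem⟩
      obtain ⟨m, hm, hQm⟩ := List.mem_iff_getElem.mp hZQ
      have hwz : w ≠ z := by
        intro he; subst he
        have := vertex_once hPss hq hr hPq hPr
        omega
      have hm1 : 1 ≤ m := by
        rcases Nat.eq_zero_or_pos m with h | h
        · exfalso; rw [gidx h hm, hQ0] at hQm; cases hQm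
        · exact h
      have hmn : m < Q.length - 1 := by
        rcases Nat.lt_or_ge m (Q.length - 1) with h | h
        · exact h
        · exfalso
          have he : m = Q.length - 1 := by omega
          rw [gidx he (by omega), hQlast, hPr] at hQm
          injection hQm with h1 h2
          exact hwz h1.symm
      have hshare : ∀ (t : ℕ) (ht : t < P.length), j ≤ t → t < q →
          ∀ w' L, P[t]'ht = GMNode.inner w' L → ∀ L',
          GMNode.inner w' L' ∈ Q.take (m+1) → False := by
        intro t ht htj htq w' L hPt L' hmem
        have hmemQ : GMNode.inner w' L' ∈ Q := (List.take_sublist _ _).mem hmem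
        rcases Nat.lt_or_ge t r with h | h
        · exact hinv t ht htj h w' L hPt L' hmemQ
        rcases Nat.eq_or_lt_of_le h with h' | h'
        · -- t = r
          have h1 := (gidx h'.symm ht).symm.trans hPt
          rw [hPr] at h1
          injection h1 with hz1 hz2
          obtain ⟨i, hi, hieq⟩ := List.mem_iff_getElem.mp hmem
          rw [List.getElem_take] at hieq
          have e2 := hQlast.trans hPr
          rw [hz1] at e2
          have hi' : i < Q.length := by
            rw [List.length_take] at hi; omega
          have := vertex_once hQss hi' (by omega) hieq e2
          rw [List.length_take] at hi
          omega
        · exact hmin' t ht (by omega) htq w' L hPt L' hmemQ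
      -- predecessor of P[q] in P
      have hedge' : gmAdj G M (P[q-1]'(by omega)) (GMNode.inner w Y) := by
        have h0 := path_adj hP (show (q-1)+1 < P.length by omega)
        rwa [gidx (show q-1+1 = q by omega) (by omega), hPq] at h0
      cases Y with
      | B =>
        rcases adj_to_B hedge' with ⟨hqs, hfree⟩ | ⟨x, hPq', hxw⟩
        · have h0 := hPss.1.getElem_inj_iff.mp (hqs.trans hP0.symm)
          omega
        · cases Z with
          | B =>
            have hedgeQ := path_adj hQ (show (m-1)+1 < Q.length by omega)
            rw [gidx (show m-1+1 = m by omega) (by omega), hQm] at hedgeQ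
            rcases adj_to_B hedgeQ with ⟨hqs2, hfree2⟩ | ⟨x', hQm', hx'w⟩
            · exact not_mfree_of_matched hM hxw hfree2
            · have hxx : x' = x := matching_unique hM hx'w hxw
              subst hxx
              rcases Nat.lt_or_ge (q-1) (r+1) with h | h
              · have hqr : q - 1 = r := by omega
                have e1 := (gidx hqr (by omega)).symm.trans hPq'
                rw [hPr] at e1
                injection e1 with hz1 hz2
                have e2 := hQlast.trans hPr
                rw [hz1, hz2] at e2
                have := vertex_once hQss (by omega) (by omega) hQm' e2
                omega
              · exact hmin' (q-1) (by omega) h (by omega) x' .A hPq' .A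
                  (List.mem_iff_getElem.mpr ⟨m-1, by omega, hQm'⟩)
          | A =>
            have hedgeQ := path_adj hQ (show m+1 < Q.length by omega)
            rw [hQm] at hedgeQ
            rcases adj_from_A hedgeQ with ht' | ⟨x', hQm1, hwx'⟩
            · exact t_not_mem (hPr ▸ hQ) (ht' ▸ List.getElem_mem (show m+1 < Q.length by omega))
            · have hxx : x' = x := matching_unique hM (by rwa [Sym2.eq_swap] at hwx') hxw
              subst hxx
              rcases Nat.lt_or_ge (q-1) (r+1) with h | h
              · have hqr : q - 1 = r := by omega
                have e1 := (gidx hqr (by omega)).symm.trans hPq'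
                rw [hPr] at e1
                injection e1 with hz1 hz2
                have e2 := hQlast.trans hPr
                rw [hz1, hz2] at e2
                exact hQss.2 x' ⟨e2 ▸ List.getElem_mem (by omega),
                  hQm1 ▸ List.getElem_mem (by omega)⟩
              · exact hmin' (q-1) (by omega) h (by omega) x' .A hPq' .B
                  (List.mem_iff_getElem.mpr ⟨m+1, by omega, hQm1⟩)
      | A =>
        obtain ⟨yv, hPq', hyw⟩ := adj_to_A hedge'
        cases Z with
        | A =>
          rcases Nat.lt_or_ge q (P.length - 1) with hql | hql
          · -- recursion
            have hQmq : Q[m]'hm = P[q]'hq := hQm.trans hPq.symm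
            have hpre := prefix_path hQ hm
            rw [hQmq] at hpre
            refine ih q hq (by omega) (by omega) (Q.take (m+1)) hpre
              (ss_sublist hQss (List.take_sublist _ _)) ?_ ?_
            · rw [List.length_take]; omega
            · intro t ht htj htq w' L hPt L' hmem
              exact hshare t ht htj htq w' L hPt L' hmem
          · -- q is the last index
            have hqe : q = P.length - 1 := by omega
            have hPqv : P[q]'hq = GMNode.inner v X := by
              rw [gidx hqe hq]; exact path_getElem_last hP (by omega)
            have hQmv : Q[m]'hm = GMNode.inner v X := hQm.trans (hPq.symm.trans hPqv)
            have hpre := prefix_path hQ hm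
            rw [hQmv] at hpre
            have hlev := level_le hpre (ss_sublist hQss (List.take_sublist _ _))
            rw [hl] at hlev
            have hle := Nat.cast_le.mp hlev
            rw [List.length_take] at hle
            omega
        | B =>
          -- flip-reversal splice: gives a short path to [u,A]
          have hseglen : ((P.take q).drop j).length = q - j := by
            rw [List.length_drop, List.length_take]; omega
          have hsegget : ∀ (i : ℕ) (hi : i < ((P.take q).drop j).length),
              ((P.take q).drop j)[i]'hi = P[j+i]'(by rw [hseglen] at hi; omega) := by
            intro i hi
            rw [List.getElem_drop, List.getElem_take]
          have hSlen : (((P.take q).drop j).reverse.map nflip).length = q - j := by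
            rw [List.length_map, List.length_reverse, hseglen]
          have hSget : ∀ (i : ℕ) (hi : i < (((P.take q).drop j).reverse.map nflip).length),
              (((P.take q).drop j).reverse.map nflip)[i]'hi
                = nflip (P[q-1-i]'(by rw [hSlen] at hi; omega)) := by
            intro i hi
            have hi2 : i < q - j := by rwa [hSlen] at hi
            rw [List.getElem_map, List.getElem_reverse, hsegget]
            exact congrArg nflip (gidx (by rw [hseglen]; omega) _)
          have hSne : (((P.take q).drop j).reverse.map nflip) ≠ [] := by
            apply List.ne_nil_of_length_pos; rw [hSlen]; omega
          have htklen : (Q.take (m+1)).length = m+1 := by rw [List.length_take]; omega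
          have hN : IsDirPath (gmAdj G M)
              (Q.take (m+1) ++ ((P.take q).drop j).reverse.map nflip)
              GMNode.s (GMNode.inner u .A) := by
            refine ⟨?_, ?_, ?_⟩
            · show List.IsChain _ _
              rw [List.isChain_append]
              refine ⟨hQ.1.take _, ?_, ?_⟩
              · show List.IsChain _ _
                rw [List.isChain_iff_getElem]
                intro i hi
                rw [hSget i (by omega), hSget (i+1) (by omega)]
                have hi' : i + 1 < q - j := by rw [hSlen] at hi; omega
                obtain ⟨a, La, ha⟩ := hinner (q-1-(i+1)) (by omega) (by omega)
                obtain ⟨b, Lb, hb⟩ := hinner (q-1-i) (by omega) (by omega)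
                have hedge2 := path_adj hP (show (q-1-(i+1)) + 1 < P.length by omega)
                rw [gidx (show q-1-(i+1)+1 = q-1-i by omega) (by omega), ha, hb] at hedge2
                rw [ha, hb]
                exact adj_flip hedge2
              · intro x hx y hy
                have hx' : x = GMNode.inner w .B := by
                  have h0 := (prefix_path hQ hm).2.2
                  rw [h0] at hx
                  have h1 : Q[m]'hm = x := by simpa using hx
                  rw [← h1, hQm]
                have hy' : y = GMNode.inner yv .A := by
                  rw [List.head?_eq_getElem?,
                    List.getElem?_eq_getElem (show 0 < (((P.take q).drop j).reverse.map nflip).length by rw [hSlen]; omega)] at hy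
                  have h1 := Eq.symm (by simpa using hy :
                    (((P.take q).drop j).reverse.map nflip)[0]'(by rw [hSlen]; omega) = y)
                  rw [h1, hSget 0 (by rw [hSlen]; omega)]
                  rw [gidx (show q-1-0 = q-1 by omega), hPq']
                  rfl
                rw [hx', hy']
                show s(w, yv) ∈ G.edgeSet \ M
                rwa [Sym2.eq_swap]
            · rw [List.head?_append, (prefix_path hQ hm).2.1]; rfl
            · rw [List.getLast?_append, List.getLast?_eq_getElem?,
                List.getElem?_eq_getElem (show (((P.take q).drop j).reverse.map nflip).length - 1 < (((P.take q).drop j).reverse.map nflip).length by rw [hSlen]; omega),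
                hSget _ (by omega)]
              rw [gidx (show q-1-((((P.take q).drop j).reverse.map nflip).length - 1) = j by rw [hSlen]; omega), hPj]
              rfl
          have hNss : StronglySimple
              (Q.take (m+1) ++ ((P.take q).drop j).reverse.map nflip) := by
            refine ss_append (ss_sublist hQss (List.take_sublist _ _))
              (ss_flip_reverse (ss_sublist hPss
                ((List.drop_sublist _ _).trans (List.take_sublist _ _)))) ?_ ?_ ?_
            · intro w' L L' hwtk hwS
              rw [List.mem_map] at hwS
              obtain ⟨xx, hxx, hxxe⟩ := hwS
              have hxx' : xx = GMNode.inner w' L'.flip := by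
                rw [← nflip_invol xx, hxxe]; cases L' <;> rfl
              rw [hxx', List.mem_reverse] at hxx
              obtain ⟨i, hi, hieq⟩ := List.mem_iff_getElem.mp hxx
              rw [hsegget i hi] at hieq
              have hi2 : i < q - j := by rwa [hseglen] at hi
              exact hshare (j+i) (by omega) (by omega) (by omega) w' L'.flip hieq L hwtk
            · intro hstk hsS
              rw [List.mem_map] at hsS
              obtain ⟨xx, hxx, hxxe⟩ := hsS
              have hxx' : xx = GMNode.s := by rw [← nflip_invol xx, hxxe]; rfl
              rw [hxx', List.mem_reverse] at hxx
              obtain ⟨i, hi, hieq⟩ := List.mem_iff_getElem.mp hxx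
              rw [hsegget i hi] at hieq
              have h0 := hPss.1.getElem_inj_iff.mp (hieq.trans hP0.symm)
              have hi2 : i < q - j := by rwa [hseglen] at hi
              omega
            · intro httk _
              exact t_not_mem (hPr ▸ hQ) ((List.take_sublist _ _).mem httk)
          have hlev := level_le hN hNss
          have hcon := hA.trans hlev
          have hle := Nat.cast_le.mp hcon
          rw [List.length_append, htklen, hSlen] at hle
          omega

lemma level_ge (hM : IsMatchingOn G M)
    {v : V} {X : Lbl} {l : ℕ} (hl : gmLevel G M (.inner v X) = (l : ℕ∞))
    {P : List (GMNode V)} (hP : IsDirPath (gmAdj G M) P GMNode.s (.inner v X))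
    (hPss : StronglySimple P) (hPlen : P.length = l + 1)
    {u : V} {j : ℕ} (hj : j < P.length) (hPj : P[j] = GMNode.inner u Lbl.B)
    (hA : (l : ℕ∞) ≤ gmLevel G M (.inner u .A)) :
    (j : ℕ∞) ≤ gmLevel G M (.inner u .B) := by
  refine le_sInf ?_
  rintro b ⟨Qp, ⟨hQp, hQss⟩, rfl⟩
  by_contra hlt
  push_neg at hlt
  have hlen : Qp.length - 1 < j := by exact_mod_cast hlt
  have hQpos : 0 < Qp.length := List.length_pos_iff.mpr (path_nonempty hQp)
  exact claim hM hl hP hPss hPlen hj hPj hA P.length j hj le_rfl (by omega) Qp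
    (by rw [hPj]; exact hQp) hQss (by omega)
    (fun t ht htj htr => absurd (htj.trans_lt htr) (lt_irrefl j))

lemma key (hM : IsMatchingOn G M)
    {v : V} {X : Lbl} {l : ℕ} (hl : gmLevel G M (.inner v X) = (l : ℕ∞))
    {P : List (GMNode V)} (hP : IsDirPath (gmAdj G M) P GMNode.s (.inner v X))
    (hPss : StronglySimple P) (hPlen : P.length = l + 1)
    {u₁ u₂ : V} {i₁ i₂ : ℕ} (hi₁ : i₁ < P.length) (hi₂ : i₂ < P.length)
    (he₁ : P[i₁] = GMNode.inner u₁ Lbl.B) (he₂ : P[i₂] = GMNode.inner u₂ Lbl.B)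
    (h : i₁ < i₂) (hA₂ : (l : ℕ∞) ≤ gmLevel G M (.inner u₂ .A)) :
    gmLevel G M (.inner u₁ .B) ≠ gmLevel G M (.inner u₂ .B) := by
  intro heq
  have h1 : gmLevel G M (GMNode.inner u₁ .B) ≤ (i₁ : ℕ∞) := by
    have hp := prefix_path hP hi₁
    rw [he₁] at hp
    have h2 := level_le hp (ss_sublist hPss (List.take_sublist _ _))
    have h3 : (P.take (i₁+1)).length - 1 = i₁ := by rw [List.length_take]; omega
    rwa [h3] at h2
  have h2 : (i₂ : ℕ∞) ≤ gmLevel G M (GMNode.inner u₂ .B) :=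
    level_ge hM hl hP hPss hPlen hi₂ he₂ hA₂
  rw [← heq] at h2
  have h4 := Nat.cast_le.mp (h2.trans h1)
  omega

end Aux

theorem dom_levels_distinct (G : SimpleGraph V) (M : Set (Sym2 V))
    (hM : IsMatchingOn G M)
    (v : V) (X : Lbl) (l : ℕ) (hl : gmLevel G M (.inner v X) = (l : ℕ∞))
    (u₁ u₂ : V) (hne : u₁ ≠ u₂)
    (h₁ : ∀ p : List (GMNode V), IsDirPath (gmAdj G M) p GMNode.s (.inner v X) →
        StronglySimple p → p.length - 1 = l → GMNode.inner u₁ Lbl.B ∈ p)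
    (h₂ : ∀ p : List (GMNode V), IsDirPath (gmAdj G M) p GMNode.s (.inner v X) →
        StronglySimple p → p.length - 1 = l → GMNode.inner u₂ Lbl.B ∈ p)
    (hA₁ : (l : ℕ∞) ≤ gmLevel G M (.inner u₁ .A))
    (hA₂ : (l : ℕ∞) ≤ gmLevel G M (.inner u₂ .A)) :
    gmLevel G M (.inner u₁ .B) ≠ gmLevel G M (.inner u₂ .B) := by
  obtain ⟨P, hP, hPss, hPlen⟩ := exists_shortest hl
  have hPl1 : P.length - 1 = l := by omega
  obtain ⟨i₁, hi₁, he₁⟩ := List.mem_iff_getElem.mp (h₁ P hP hPss hPl1)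
  obtain ⟨i₂, hi₂, he₂⟩ := List.mem_iff_getElem.mp (h₂ P hP hPss hPl1)
  rcases Nat.lt_or_ge i₁ i₂ with h | h
  · exact key hM hl hP hPss hPlen hi₁ hi₂ he₁ he₂ h hA₂
  · rcases Nat.eq_or_lt_of_le h with h' | h'
    · exfalso
      rw [← gidx h'.symm hi₁] at he₂
      rw [he₁] at he₂
      injection he₂ with ha hb
      exact hne ha
    · exact (key hM hl hP hPss hPlen hi₂ hi₁ he₂ he₁ h' hA₁).symm
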